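/- Let T be a standard m-tableau of shape λ (an m-partition of size N ≥ 1), with contents c_i := c(T|i) and positions p_i := p(T|i), and let μ be the shape of the m-tableau obtained from T by removing the node containing N. Then the rational function F_T(u) := ((u − c_N)/u) · ∏_{i=1}^{N−1} (u − c_i)^2 / ((u − c_i)^2 − δ_{p_i, p_N}) is non-singular at u = c_N, and its value there equals F_μ / F_λ, where F_λ denotes the product of the hook lengths of all nodes of the m-partition λ (and similarly F_μ). -/

import Mathlib

noncomputable section

/-- The hook length of a cell `x` in a (finite) Young diagram `F ⊆ ℕ × ℕ`
(cells as `(row, column)` pairs): the number of cells of `F` in the same row, weakly to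
the right of `x`, plus the number of cells of `F` in the same column, strictly below `x`. -/
def hookLength (F : Finset (ℕ × ℕ)) (x : ℕ × ℕ) : ℕ :=
  (F.filter (fun y => y.1 = x.1 ∧ x.2 ≤ y.2)).card +
    (F.filter (fun y => y.2 = x.2 ∧ x.1 < y.1)).card

variable {m n : ℕ}

/-- The `k`-th diagram of the shape of the `m`-tableau `T` (a node is a pair
`((row, column), position)`). -/
def shapeOf (T : Fin (n + 1) → (ℕ × ℕ) × Fin m) (k : Fin m) : Finset (ℕ × ℕ) :=
  (Finset.univ.filter (fun i : Fin (n + 1) => (T i).2 = k)).image (fun i => (T i).1)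

/-- The `k`-th diagram of the shape `μ` obtained by removing the node containing the last
entry of `T`. -/
def shapeOfErase (T : Fin (n + 1) → (ℕ × ℕ) × Fin m) (k : Fin m) : Finset (ℕ × ℕ) :=
  ((Finset.univ.erase (Fin.last n)).filter (fun i : Fin (n + 1) => (T i).2 = k)).image
    (fun i => (T i).1)

/-- The classical content `c(T|i) = column − row` of the node of `T` numbered `i`. -/
def contentOf (T : Fin (n + 1) → (ℕ × ℕ) × Fin m) (i : Fin (n + 1)) : ℂ :=
  ((T i).1.2 : ℂ) - ((T i).1.1 : ℂ)


namespace FusionAux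
open Finset


lemma initialSeg (S : Finset ℕ) (h : ∀ a ∈ S, ∀ b, b ≤ a → b ∈ S) :
    S = Finset.range S.card := by
  have key : ∀ x, x ∈ S ↔ x < S.card := by
    intro x
    constructor
    · intro hx
      have hsub : Finset.range (x + 1) ⊆ S := by
        intro b hb
        exact h x hx b (Nat.lt_succ_iff.mp (Finset.mem_range.mp hb))
      have := Finset.card_le_card hsub
      simpa [Nat.succ_le_iff] using this
    · intro hx
      by_contra hxS
      have hsub : S ⊆ Finset.range x := by
        intro a ha
        rw [Finset.mem_range]
        by_contra hax
        exact hxS (h a ha x (Nat.le_of_not_lt hax))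
      have := Finset.card_le_card hsub
      simp [Finset.card_range] at this
      omega
  ext x
  rw [Finset.mem_range, key]

def DC (X : Finset (ℕ × ℕ)) : Prop :=
  ∀ ⦃a : ℕ × ℕ⦄, a ∈ X → ∀ ⦃b : ℕ × ℕ⦄, b.1 ≤ a.1 → b.2 ≤ a.2 → b ∈ X

def rowLen (X : Finset (ℕ × ℕ)) (i : ℕ) : ℕ := (X.filter (fun y => y.1 = i)).card
def colLen (X : Finset (ℕ × ℕ)) (j : ℕ) : ℕ := (X.filter (fun y => y.2 = j)).card

lemma mem_iff_row {X : Finset (ℕ × ℕ)} (hX : DC X) {i j : ℕ} :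
    (i, j) ∈ X ↔ j < rowLen X i := by
  have hcard : ((X.filter (fun y => y.1 = i)).image Prod.snd).card = rowLen X i := by
    rw [rowLen]
    apply Finset.card_image_of_injOn
    intro a ha b hb hab
    simp only [Finset.mem_coe, Finset.mem_filter] at ha hb
    exact Prod.ext (ha.2.trans hb.2.symm) hab
  have himg : (X.filter (fun y => y.1 = i)).image Prod.snd
      = Finset.range (rowLen X i) := by
    rw [← hcard]
    apply initialSeg
    intro a ha b hba
    simp only [Finset.mem_image, Finset.mem_filter] at ha ⊢
    obtain ⟨y, ⟨hy, hy1⟩, hy2⟩ := ha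
    exact ⟨(i, b), ⟨hX hy (le_of_eq hy1.symm) (by simpa [hy2] using hba), rfl⟩, rfl⟩
  constructor
  · intro hmem
    have : j ∈ (X.filter (fun y => y.1 = i)).image Prod.snd := by
      simp only [Finset.mem_image, Finset.mem_filter]
      exact ⟨(i, j), ⟨hmem, rfl⟩, rfl⟩
    rw [himg, Finset.mem_range] at this
    exact this
  · intro hj
    have : j ∈ (X.filter (fun y => y.1 = i)).image Prod.snd := by
      rw [himg, Finset.mem_range]; exact hj
    simp only [Finset.mem_image, Finset.mem_filter] at this
    obtain ⟨y, ⟨hy, hy1⟩, hy2⟩ := this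
    have : y = (i, j) := Prod.ext hy1 hy2
    rwa [this] at hy

lemma mem_iff_col {X : Finset (ℕ × ℕ)} (hX : DC X) {i j : ℕ} :
    (i, j) ∈ X ↔ i < colLen X j := by
  have hcard : ((X.filter (fun y => y.2 = j)).image Prod.fst).card = colLen X j := by
    rw [colLen]
    apply Finset.card_image_of_injOn
    intro a ha b hb hab
    simp only [Finset.mem_coe, Finset.mem_filter] at ha hb
    exact Prod.ext hab (ha.2.trans hb.2.symm)
  have himg : (X.filter (fun y => y.2 = j)).image Prod.fst
      = Finset.range (colLen X j) := by
    rw [← hcard]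
    apply initialSeg
    intro a ha b hba
    simp only [Finset.mem_image, Finset.mem_filter] at ha ⊢
    obtain ⟨y, ⟨hy, hy1⟩, hy2⟩ := ha
    exact ⟨(b, j), ⟨hX hy (by simpa [hy2] using hba) (le_of_eq hy1.symm), rfl⟩, rfl⟩
  constructor
  · intro hmem
    have : i ∈ (X.filter (fun y => y.2 = j)).image Prod.fst := by
      simp only [Finset.mem_image, Finset.mem_filter]
      exact ⟨(i, j), ⟨hmem, rfl⟩, rfl⟩
    rw [himg, Finset.mem_range] at this
    exact this
  · intro hj
    have : i ∈ (X.filter (fun y => y.2 = j)).image Prod.fst := by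
      rw [himg, Finset.mem_range]; exact hj
    simp only [Finset.mem_image, Finset.mem_filter] at this
    obtain ⟨y, ⟨hy, hy1⟩, hy2⟩ := this
    have : y = (i, j) := Prod.ext hy2 hy1
    rwa [this] at hy

lemma rowLen_anti {X : Finset (ℕ × ℕ)} (hX : DC X) : Antitone (rowLen X) := by
  intro a b hab
  by_contra h
  push_neg at h
  have : (b, rowLen X a) ∈ X := (mem_iff_row hX).mpr h
  have : (a, rowLen X a) ∈ X := hX this hab le_rfl
  have := (mem_iff_row hX).mp this
  omega

lemma colLen_anti {X : Finset (ℕ × ℕ)} (hX : DC X) : Antitone (colLen X) := by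
  intro a b hab
  by_contra h
  push_neg at h
  have : (colLen X a, b) ∈ X := (mem_iff_col hX).mpr h
  have : (colLen X a, a) ∈ X := hX this le_rfl hab
  have := (mem_iff_col hX).mp this
  omega

lemma hook_int {X : Finset (ℕ × ℕ)} (hX : DC X) {i j : ℕ} (hij : (i, j) ∈ X) :
    (hookLength X (i, j) : ℤ) =
      (rowLen X i : ℤ) - j + (colLen X j : ℤ) - i - 1 := by
  have hrow : X.filter (fun y => y.1 = i ∧ j ≤ y.2)
      = (Finset.Ico j (rowLen X i)).image (fun t => (i, t)) := by
    ext y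
    simp only [Finset.mem_filter, Finset.mem_image, Finset.mem_Ico]
    constructor
    · rintro ⟨hy, h1, h2⟩
      refine ⟨y.2, ⟨h2, ?_⟩, by rw [← h1]⟩
      have : (y.1, y.2) ∈ X := by simpa using hy
      rw [h1] at this
      exact (mem_iff_row hX).mp this
    · rintro ⟨t, ⟨ht1, ht2⟩, rfl⟩
      exact ⟨(mem_iff_row hX).mpr ht2, rfl, ht1⟩
  have hcol : X.filter (fun y => y.2 = j ∧ i < y.1)
      = (Finset.Ioo i (colLen X j)).image (fun t => (t, j)) := by
    ext y
    simp only [Finset.mem_filter, Finset.mem_image, Finset.mem_Ioo]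
    constructor
    · rintro ⟨hy, h1, h2⟩
      refine ⟨y.1, ⟨h2, ?_⟩, by rw [← h1]⟩
      have : (y.1, y.2) ∈ X := by simpa using hy
      rw [h1] at this
      exact (mem_iff_col hX).mp this
    · rintro ⟨t, ⟨ht1, ht2⟩, rfl⟩
      exact ⟨(mem_iff_col hX).mpr ht2, rfl, ht1⟩
  have hj : j < rowLen X i := (mem_iff_row hX).mp hij
  have hi : i < colLen X j := (mem_iff_col hX).mp hij
  rw [hookLength, hrow, hcol, Finset.card_image_of_injective _ (by intro a b hab; simpa using hab),
    Finset.card_image_of_injective _ (by intro a b hab; simpa using hab),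
    Nat.card_Ico, Nat.card_Ioo]
  push_cast
  omega

lemma hook_pos {X : Finset (ℕ × ℕ)} {x : ℕ × ℕ} (hx : x ∈ X) : 0 < hookLength X x := by
  have : x ∈ X.filter (fun y => y.1 = x.1 ∧ x.2 ≤ y.2) := by
    simp [Finset.mem_filter, hx]
  have := Finset.card_pos.mpr ⟨x, this⟩
  rw [hookLength]
  omega

lemma tele1 (v : ℂ) : ∀ (mm : ℕ), (∀ t : ℕ, t ≤ mm → v - t ≠ 0) →
    ∏ t ∈ Finset.range mm, ((v - t) / (v - t - 1)) = v / (v - mm) := by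
  intro mm
  induction mm with
  | zero => intro h; simp [div_self (by simpa using h 0 (le_refl 0))]
  | succ k ih =>
    intro h
    rw [Finset.prod_range_succ, ih (fun t ht => h t (le_trans ht (Nat.le_succ k)))]
    have h1 : v - k ≠ 0 := h k (Nat.le_succ k)
    have h2 : (v - (k + 1 : ℕ)) = v - k - 1 := by push_cast; ring
    rw [h2]
    field_simp
    try ring

lemma tele2 (v : ℂ) : ∀ (mm : ℕ), (∀ t : ℕ, t ≤ mm → v + 1 - t ≠ 0) →
    ∏ t ∈ Finset.range mm, ((v - t) / (v - t + 1)) = (v - mm + 1) / (v + 1) := by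
  intro mm
  induction mm with
  | zero => intro h; simp [div_self (by simpa using h 0 (le_refl 0))]
  | succ k ih =>
    intro h
    rw [Finset.prod_range_succ, ih (fun t ht => h t (le_trans ht (Nat.le_succ k)))]
    have h1 : v - k + 1 ≠ 0 := by
      have := h k (Nat.le_succ k)
      intro hc; apply this; rw [← hc]; ring
    have h2 : v + 1 ≠ 0 := by simpa using h 0 (Nat.zero_le _)
    have h3 : (v - (k + 1 : ℕ) + 1) = v - k := by push_cast; ring
    rw [h3]
    field_simp
    try ring

lemma tele3 (v : ℂ) : ∀ (mm : ℕ), (∀ t : ℕ, t ≤ mm → v + t ≠ 0) →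
    ∏ t ∈ Finset.range mm, ((v + t) / (v + t + 1)) = v / (v + mm) := by
  intro mm
  induction mm with
  | zero => intro h; simp [div_self (by simpa using h 0 (le_refl 0))]
  | succ k ih =>
    intro h
    rw [Finset.prod_range_succ, ih (fun t ht => h t (le_trans ht (Nat.le_succ k)))]
    have h1 : v + k ≠ 0 := h k (Nat.le_succ k)
    have h2 : ((k : ℂ) + 1) = ((k + 1 : ℕ) : ℂ) := by push_cast; ring
    field_simp
    try ring
    push_cast; ring

lemma shiftProd (N : ℤ) (hN : 0 ≤ N) :
    ∏ t ∈ Finset.Icc (1 : ℤ) N, (t + 1) = (N + 1) * ∏ t ∈ Finset.Icc (1 : ℤ) N, t := by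
  obtain ⟨M, rfl⟩ := Int.eq_ofNat_of_zero_le hN
  induction M with
  | zero => simp
  | succ M ih =>
    have hins : Finset.Icc (1 : ℤ) ((M : ℤ) + 1) = insert ((M : ℤ) + 1) (Finset.Icc (1 : ℤ) (M : ℤ)) := by
      ext x
      simp only [Finset.mem_insert, Finset.mem_Icc]
      omega
    have hnm : ((M : ℤ) + 1) ∉ Finset.Icc (1 : ℤ) (M : ℤ) := by
      simp only [Finset.mem_Icc]; omega
    have : ((M + 1 : ℕ) : ℤ) = (M : ℤ) + 1 := by push_cast; ring
    rw [this, hins, Finset.prod_insert hnm, Finset.prod_insert hnm, ih (by positivity)]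
    try ring

lemma prod_neg_range (f : ℕ → ℤ) (r : ℕ) :
    ∏ j ∈ Finset.range r, -f j = (-1) ^ r * ∏ j ∈ Finset.range r, f j := by
  induction r with
  | zero => simp
  | succ k ih =>
    rw [Finset.prod_range_succ, Finset.prod_range_succ, ih]
    ring

lemma RH (G : Finset (ℕ × ℕ)) (hG : DC G) (k r : ℕ) (hrk : r < k)
    (hrow0 : ∀ i, k ≤ i → rowLen G i = 0) (g : ℤ → ℤ) :
    (∏ j ∈ Finset.range (rowLen G r), g ((rowLen G r : ℤ) - j + colLen G j - r - 1)) *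
      (∏ i ∈ Finset.Ioo r k, g (((rowLen G r : ℤ) - r) - ((rowLen G i : ℤ) - i))) =
      ∏ t ∈ Finset.Icc (1 : ℤ) ((rowLen G r : ℤ) + k - 1 - r), g t := by
  set s : ℕ := rowLen G r with hs
  set a : ℕ → ℤ := fun j => (s : ℤ) - j + colLen G j - r - 1 with ha
  set b : ℕ → ℤ := fun i => ((s : ℤ) - r) - ((rowLen G i : ℤ) - i) with hb
  set N : ℤ := (s : ℤ) + k - 1 - r with hN
  have hcol_le_k : ∀ j, colLen G j ≤ k := by
    intro j
    by_contra h
    push_neg at h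
    have : (k, j) ∈ G := (mem_iff_col hG).mpr h
    have := (mem_iff_row hG).mp this
    rw [hrow0 k le_rfl] at this
    omega
  have hcol_ge : ∀ j, j < s → r + 1 ≤ colLen G j := by
    intro j hj
    have : (r, j) ∈ G := (mem_iff_row hG).mpr hj
    exact (mem_iff_col hG).mp this
  have hrow_le : ∀ i, r ≤ i → rowLen G i ≤ s := fun i hi => rowLen_anti hG hi
  have hiaA : Set.InjOn a (Finset.range s) := by
    intro x hx y hy hxy
    simp only [Finset.mem_coe, Finset.mem_range] at hx hy
    rcases Nat.lt_trichotomy x y with h | h | h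
    · have := colLen_anti hG (le_of_lt h)
      simp only [ha] at hxy; omega
    · exact h
    · have := colLen_anti hG (le_of_lt h)
      simp only [ha] at hxy; omega
  have hiaB : Set.InjOn b (Finset.Ioo r k) := by
    intro x hx y hy hxy
    rcases Nat.lt_trichotomy x y with h | h | h
    · have := rowLen_anti hG (le_of_lt h)
      simp only [hb] at hxy; omega
    · exact h
    · have := rowLen_anti hG (le_of_lt h)
      simp only [hb] at hxy; omega
  have hAmem : ∀ j, j < s → a j ∈ Finset.Icc (1 : ℤ) N := by
    intro j hj
    have h1 := hcol_ge j hj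
    have h2 := hcol_le_k j
    simp only [ha, hN, Finset.mem_Icc]
    omega
  have hBmem : ∀ i, i ∈ Finset.Ioo r k → b i ∈ Finset.Icc (1 : ℤ) N := by
    intro i hi
    simp only [Finset.mem_Ioo] at hi
    have h1 := hrow_le i (le_of_lt hi.1)
    simp only [hb, hN, Finset.mem_Icc]
    omega
  have hdisj : ∀ j, j < s → ∀ i, i ∈ Finset.Ioo r k → a j ≠ b i := by
    intro j hj i hi heq
    simp only [Finset.mem_Ioo] at hi
    simp only [ha, hb] at heq
    by_cases hmem : (i, j) ∈ G
    · have h1 := (mem_iff_col hG).mp hmem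
      have h2 := (mem_iff_row hG).mp hmem
      omega
    · have h1 : ¬ i < colLen G j := fun h => hmem ((mem_iff_col hG).mpr h)
      have h2 : ¬ j < rowLen G i := fun h => hmem ((mem_iff_row hG).mpr h)
      omega
  set A : Finset ℤ := (Finset.range s).image a with hA
  set B : Finset ℤ := (Finset.Ioo r k).image b with hB
  have hDisjAB : Disjoint A B := by
    rw [Finset.disjoint_left]
    intro x hxA hxB
    simp only [hA, hB, Finset.mem_image, Finset.mem_range] at hxA hxB
    obtain ⟨j, hj, rfl⟩ := hxA
    obtain ⟨i, hi, hbi⟩ := hxB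
    exact hdisj j hj i hi hbi.symm
  have hcardA : A.card = s := by
    rw [hA, Finset.card_image_of_injOn hiaA, Finset.card_range]
  have hcardB : B.card = k - r - 1 := by
    rw [hB, Finset.card_image_of_injOn hiaB, Nat.card_Ioo]
  have hUnion : A ∪ B = Finset.Icc (1 : ℤ) N := by
    apply Finset.eq_of_subset_of_card_le
    · intro x hx
      rcases Finset.mem_union.mp hx with h | h
      · simp only [hA, Finset.mem_image, Finset.mem_range] at h
        obtain ⟨j, hj, rfl⟩ := h
        exact hAmem j hj
      · simp only [hB, Finset.mem_image] at h
        obtain ⟨i, hi, rfl⟩ := h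
        exact hBmem i hi
    · rw [Finset.card_union_of_disjoint hDisjAB, hcardA, hcardB, Int.card_Icc]
      simp only [hN]
      omega
  calc (∏ j ∈ Finset.range s, g (a j)) * (∏ i ∈ Finset.Ioo r k, g (b i))
      = (∏ x ∈ A, g x) * (∏ x ∈ B, g x) := by
        rw [hA, hB, Finset.prod_image hiaA, Finset.prod_image hiaB]
    _ = ∏ x ∈ A ∪ B, g x := (Finset.prod_union hDisjAB).symm
    _ = ∏ t ∈ Finset.Icc (1 : ℤ) N, g t := by rw [hUnion]


end FusionAux

set_option maxHeartbeats 1600000 in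
/-- Let `T` be a standard `m`-tableau of shape `λ`, an `m`-partition of size `N = n+1`
(standardness and well-shapedness are encoded by: `T` is injective and every node of `T`
dominates, among the earlier entries, its whole lower rectangle in its own diagram).
Let `μ` be the shape obtained by removing the node containing `N`.  Then the rational
function `F_T(u) = ((u − c_N)/u) ∏_{i<N} (u − c_i)²/((u − c_i)² − δ_{p_i,p_N})` is
non-singular at `u = c_N` with value `F_μ/F_λ`, where `F_λ` (resp. `F_μ`) is the product
of the hook lengths of the nodes of `λ` (resp. `μ`). -/
theorem fusion_function_limit (m n : ℕ) (T : Fin (n + 1) → (ℕ × ℕ) × Fin m)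
    (hinj : Function.Injective T)
    (hstd : ∀ (j : Fin (n + 1)) (r' c' : ℕ), r' ≤ (T j).1.1 → c' ≤ (T j).1.2 →
      ∃ j' : Fin (n + 1), j' ≤ j ∧ T j' = ((r', c'), (T j).2)) :
    Filter.Tendsto
      (fun u : ℂ =>
        ((u - contentOf T (Fin.last n)) / u) *
          ∏ i ∈ Finset.univ.erase (Fin.last n),
            ((u - contentOf T i) ^ 2 /
              ((u - contentOf T i) ^ 2 -
                (if (T i).2 = (T (Fin.last n)).2 then 1 else 0))))
      (nhdsWithin (contentOf T (Fin.last n)) {contentOf T (Fin.last n)}ᶜ)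
      (nhds
        ((∏ i ∈ Finset.univ.erase (Fin.last n),
            (hookLength (shapeOfErase T (T i).2) (T i).1 : ℂ)) /
          (∏ i : Fin (n + 1), (hookLength (shapeOf T (T i).2) (T i).1 : ℂ)))) := by
  classical
  open Finset FusionAux in
  set lastI : Fin (n + 1) := Fin.last n with hlastI
  set p : Fin m := (T lastI).2 with hpdef
  set r : ℕ := (T lastI).1.1 with hrdef
  set s : ℕ := (T lastI).1.2 with hsdef
  have hTlast : T lastI = ((r, s), p) := rfl
  set F : Finset (ℕ × ℕ) := shapeOf T p with hFdef
  set G : Finset (ℕ × ℕ) := shapeOfErase T p with hGdef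
  have mem_shape : ∀ (k : Fin m) (x : ℕ × ℕ),
      x ∈ shapeOf T k ↔ ∃ i, (T i).2 = k ∧ (T i).1 = x := by
    intro k x; simp [shapeOf]
  have mem_shapeE : ∀ (k : Fin m) (x : ℕ × ℕ),
      x ∈ shapeOfErase T k ↔ ∃ i, i ≠ lastI ∧ (T i).2 = k ∧ (T i).1 = x := by
    intro k x
    simp only [shapeOfErase, Finset.mem_image, Finset.mem_filter, Finset.mem_erase,
      Finset.mem_univ, and_true, true_and]
    tauto
  have hDCshape : ∀ k : Fin m, DC (shapeOf T k) := by
    intro k x hx y h1 h2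
    rw [mem_shape] at hx ⊢
    obtain ⟨i, hik, hix⟩ := hx
    obtain ⟨j', _, hj'⟩ := hstd i y.1 y.2 (by rw [hix]; exact h1) (by rw [hix]; exact h2)
    refine ⟨j', by rw [hj', hik], by rw [hj']⟩
  have hDCF : DC F := hDCshape p
  have hcard_shape : ∀ k : Fin m, (shapeOf T k).card ≤ n + 1 := by
    intro k
    calc (shapeOf T k).card
        ≤ (Finset.univ.filter fun i : Fin (n+1) => (T i).2 = k).card :=
          Finset.card_image_le
      _ ≤ (Finset.univ : Finset (Fin (n+1))).card := Finset.card_filter_le _ _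
      _ = n + 1 := by simp
  have hrowlen_le : ∀ (k : Fin m) (i : ℕ), rowLen (shapeOf T k) i ≤ n + 1 :=
    fun k i => le_trans (Finset.card_filter_le _ _) (hcard_shape k)
  have hcollen_le : ∀ (k : Fin m) (j : ℕ), colLen (shapeOf T k) j ≤ n + 1 :=
    fun k j => le_trans (Finset.card_filter_le _ _) (hcard_shape k)
  have hcell : ∀ (k : Fin m) (x : ℕ × ℕ), x ∈ shapeOf T k → x.1 ≤ n ∧ x.2 ≤ n := by
    intro k x hx
    have h1 : x.2 < rowLen (shapeOf T k) x.1 := (mem_iff_row (hDCshape k)).mp hx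
    have h2 : x.1 < colLen (shapeOf T k) x.2 := (mem_iff_col (hDCshape k)).mp hx
    have h3 := hrowlen_le k x.1
    have h4 := hcollen_le k x.2
    omega
  have hrsF : (r, s) ∈ F := by
    rw [hFdef, mem_shape]
    exact ⟨lastI, rfl, rfl⟩
  have hnotup : (r, s + 1) ∉ F := by
    rw [hFdef, mem_shape]
    rintro ⟨i, hik, hix⟩
    obtain ⟨j', hj'le, hj'⟩ := hstd i r s (by rw [hix]) (by rw [hix]; omega)
    have hTj' : T j' = T lastI := by rw [hj', hTlast, hik]
    have : i = lastI := le_antisymm (Fin.le_last i) ((hinj hTj') ▸ hj'le)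
    rw [this, hTlast] at hix
    simp at hix
  have hnotdown : (r + 1, s) ∉ F := by
    rw [hFdef, mem_shape]
    rintro ⟨i, hik, hix⟩
    obtain ⟨j', hj'le, hj'⟩ := hstd i r s (by rw [hix]; omega) (by rw [hix])
    have hTj' : T j' = T lastI := by rw [hj', hTlast, hik]
    have : i = lastI := le_antisymm (Fin.le_last i) ((hinj hTj') ▸ hj'le)
    rw [this, hTlast] at hix
    simp at hix
  have hGF : G = F.erase (r, s) := by
    ext x
    rw [hGdef, mem_shapeE, Finset.mem_erase, hFdef, mem_shape]
    constructor
    · rintro ⟨i, hil, hik, hix⟩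
      refine ⟨?_, ⟨i, hik, hix⟩⟩
      rintro rfl
      apply hil
      apply hinj
      rw [hTlast, ← hix, ← hik]
    · rintro ⟨hne, i, hik, hix⟩
      refine ⟨i, ?_, hik, hix⟩
      rintro rfl
      rw [hTlast] at hix
      exact hne hix.symm
  have hGsubF : G ⊆ F := by rw [hGF]; exact Finset.erase_subset _ _
  have hDCG : DC G := by
    intro x hx y h1 h2
    rw [hGF, Finset.mem_erase] at hx ⊢
    obtain ⟨hxne, hxF⟩ := hx
    refine ⟨?_, hDCF hxF h1 h2⟩
    rintro rfl
    by_cases hx1 : x.1 = r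
    · by_cases hx2 : x.2 = s
      · exact hxne (Prod.ext hx1 hx2)
      · have hs2 : s + 1 ≤ x.2 := by
          rcases Nat.lt_or_ge s x.2 with h | h
          · omega
          · exact absurd (le_antisymm h h2) hx2
        exact hnotup (hDCF hxF (le_of_eq hx1.symm) hs2)
    · have hr1 : r + 1 ≤ x.1 := by
        rcases Nat.lt_or_ge r x.1 with h | h
        · omega
        · exact absurd (le_antisymm h h1) hx1
      exact hnotdown (hDCF hxF hr1 h2)
  have hrn : r ≤ n := (hcell p (r, s) hrsF).1
  have hsn : s ≤ n := (hcell p (r, s) hrsF).2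
  have hRFr : rowLen F r = s + 1 := by
    have h1 : s < rowLen F r := (mem_iff_row hDCF).mp hrsF
    have h2 : ¬ (s + 1 < rowLen F r) := fun h => hnotup ((mem_iff_row hDCF).mpr h)
    omega
  have hCFs : colLen F s = r + 1 := by
    have h1 : r < colLen F s := (mem_iff_col hDCF).mp hrsF
    have h2 : ¬ (r + 1 < colLen F s) := fun h => hnotdown ((mem_iff_col hDCF).mpr h)
    omega
  have hrowG : ∀ i, i ≠ r → rowLen G i = rowLen F i := by
    intro i hi
    rw [hGF, rowLen, rowLen, Finset.filter_erase, Finset.erase_eq_of_notMem]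
    intro h
    rw [Finset.mem_filter] at h
    exact hi h.2.symm
  have hcolG : ∀ j, j ≠ s → colLen G j = colLen F j := by
    intro j hj
    rw [hGF, colLen, colLen, Finset.filter_erase, Finset.erase_eq_of_notMem]
    intro h
    rw [Finset.mem_filter] at h
    exact hj h.2.symm
  have hRGr : rowLen G r = s := by
    rw [hGF, rowLen, Finset.filter_erase, Finset.card_erase_of_mem]
    · rw [show (F.filter (fun y => y.1 = r)).card = rowLen F r from rfl, hRFr]
      omega
    · rw [Finset.mem_filter]; exact ⟨hrsF, rfl⟩

  have hCGs : colLen G s = r := by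
    rw [hGF, colLen, Finset.filter_erase, Finset.card_erase_of_mem]
    · rw [show (F.filter (fun y => y.2 = s)).card = colLen F s from rfl, hCFs]
      omega
    · rw [Finset.mem_filter]; exact ⟨hrsF, rfl⟩
  have hrowF0 : ∀ i, n + 1 ≤ i → rowLen F i = 0 := by
    intro i hi
    by_contra h
    have h0 : (i, 0) ∈ F := (mem_iff_row hDCF).mpr (Nat.pos_of_ne_zero h)
    have := (hcell p (i, 0) h0).1
    omega
  have hrowG0 : ∀ i, n + 1 ≤ i → rowLen G i = 0 := by
    intro i hi
    rw [hrowG i (by omega)]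
    exact hrowF0 i hi
  set γ : ℕ → ℤ := fun j => (rowLen G j : ℤ) - j with hγdef
  have hγanti : StrictAnti γ := by
    apply strictAnti_nat_of_succ_lt
    intro j
    have := rowLen_anti hDCG (show j ≤ j + 1 by omega)
    simp only [hγdef]
    push_cast
    omega
  set cz : ℤ := (s : ℤ) - r with hczdef
  have hγr : γ r = cz := by simp [hγdef, hRGr, hczdef]
  -- hooks
  have hhook_rs : (hookLength F (r, s) : ℤ) = 1 := by
    rw [hook_int hDCF hrsF, hRFr, hCFs]
    push_cast
    ring
  have hmemGrow : ∀ j, j < s → (r, j) ∈ G := by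
    intro j hj
    exact (mem_iff_row hDCG).mpr (by rw [hRGr]; exact hj)
  have hmemGcol : ∀ i, i < r → (i, s) ∈ G := by
    intro i hi
    exact (mem_iff_col hDCG).mpr (by rw [hCGs]; exact hi)
  have haj : ∀ j, j < s →
      (hookLength G (r, j) : ℤ) = (s : ℤ) - j + colLen G j - r - 1 := by
    intro j hj
    rw [hook_int hDCG (hmemGrow j hj), hRGr]
  have hdj : ∀ i, i < r → (hookLength G (i, s) : ℤ) = γ i - cz - 1 := by
    intro i hi
    rw [hook_int hDCG (hmemGcol i hi), hCGs]
    simp only [hγdef, hczdef]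
    ring
  have hFaj : ∀ j, j < s →
      (hookLength F (r, j) : ℤ) = (hookLength G (r, j) : ℤ) + 1 := by
    intro j hj
    have hjF : (r, j) ∈ F := hGsubF (hmemGrow j hj)
    rw [hook_int hDCF hjF, hook_int hDCG (hmemGrow j hj), hRFr, hRGr,
      hcolG j (by omega)]
    push_cast
    ring
  have hFdi : ∀ i, i < r →
      (hookLength F (i, s) : ℤ) = (hookLength G (i, s) : ℤ) + 1 := by
    intro i hi
    have hiF : (i, s) ∈ F := hGsubF (hmemGcol i hi)
    rw [hook_int hDCF hiF, hook_int hDCG (hmemGcol i hi), hCFs, hCGs,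
      hrowG i (by omega)]
    push_cast
    ring
  have hoff : ∀ x ∈ G, ¬(x.1 = r ∨ x.2 = s) → hookLength F x = hookLength G x := by
    intro x hxG hx
    push_neg at hx
    have e1 : G.filter (fun y => y.1 = x.1 ∧ x.2 ≤ y.2)
        = F.filter (fun y => y.1 = x.1 ∧ x.2 ≤ y.2) := by
      rw [hGF, Finset.filter_erase, Finset.erase_eq_of_notMem]
      intro h
      rw [Finset.mem_filter] at h
      exact hx.1 h.2.1.symm
    have e2 : G.filter (fun y => y.2 = x.2 ∧ x.1 < y.1)
        = F.filter (fun y => y.2 = x.2 ∧ x.1 < y.1) := by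
      rw [hGF, Finset.filter_erase, Finset.erase_eq_of_notMem]
      intro h
      rw [Finset.mem_filter] at h
      exact hx.2 h.2.1.symm
    rw [hookLength, hookLength, e1, e2]
  -- splitting the product over G
  have hrowSet : G.filter (fun x => x.1 = r ∨ x.2 = s)
      = (Finset.range s).image (fun j => (r, j))
        ∪ (Finset.range r).image (fun i => (i, s)) := by
    ext x
    simp only [Finset.mem_filter, Finset.mem_union, Finset.mem_image, Finset.mem_range]
    constructor
    · rintro ⟨hxG, hx | hx⟩
      · left
        refine ⟨x.2, ?_, by rw [← hx]⟩
        have : (r, x.2) ∈ G := by rw [← hx]; exact hxG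
        have := (mem_iff_row hDCG).mp this
        omega
      · by_cases hx1 : x.1 = r
        · left
          refine ⟨x.2, ?_, by rw [← hx1]⟩
          have : (r, x.2) ∈ G := by rw [← hx1]; exact hxG
          have := (mem_iff_row hDCG).mp this
          omega
        · right
          refine ⟨x.1, ?_, by rw [← hx]⟩
          have : (x.1, s) ∈ G := by rw [← hx]; exact hxG
          have := (mem_iff_col hDCG).mp this
          omega
    · rintro (⟨j, hj, rfl⟩ | ⟨i, hi, rfl⟩)
      · exact ⟨hmemGrow j hj, Or.inl rfl⟩
      · exact ⟨hmemGcol i hi, Or.inr rfl⟩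
  have hdisjRC : Disjoint ((Finset.range s).image (fun j => ((r : ℕ), j)))
      ((Finset.range r).image (fun i => (i, (s : ℕ)))) := by
    rw [Finset.disjoint_left]
    rintro x hx1 hx2
    simp only [Finset.mem_image, Finset.mem_range] at hx1 hx2
    obtain ⟨j, hj, rfl⟩ := hx1
    obtain ⟨i, hi, hie⟩ := hx2
    have : i = r := congrArg Prod.fst hie
    omega
  have hGsplit : ∀ f : ℕ × ℕ → ℤ, (∏ x ∈ G, f x)
      = (∏ x ∈ G.filter (fun x => ¬(x.1 = r ∨ x.2 = s)), f x)
        * ((∏ j ∈ Finset.range s, f (r, j)) * (∏ i ∈ Finset.range r, f (i, s))) := by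
    intro f
    rw [← Finset.prod_filter_mul_prod_filter_not G (fun x => x.1 = r ∨ x.2 = s) f]
    rw [hrowSet, Finset.prod_union hdisjRC,
      Finset.prod_image (by intro a _ b _ h; exact (Prod.mk.injEq _ _ _ _).mp h |>.2),
      Finset.prod_image (by intro a _ b _ h; exact (Prod.mk.injEq _ _ _ _).mp h |>.1)]
    ring
  set PRest : ℤ := ∏ x ∈ G.filter (fun x => ¬(x.1 = r ∨ x.2 = s)), (hookLength G x : ℤ)
    with hPRest
  have hprodGG : (∏ x ∈ G, (hookLength G x : ℤ))
      = PRest * ((∏ j ∈ Finset.range s, (hookLength G (r, j) : ℤ))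
          * (∏ i ∈ Finset.range r, (hookLength G (i, s) : ℤ))) :=
    hGsplit (fun x => (hookLength G x : ℤ))
  have hprodGF : (∏ x ∈ G, (hookLength F x : ℤ))
      = PRest * ((∏ j ∈ Finset.range s, ((hookLength G (r, j) : ℤ) + 1))
          * (∏ i ∈ Finset.range r, ((hookLength G (i, s) : ℤ) + 1))) := by
    have h1 : (∏ x ∈ G.filter (fun x => ¬(x.1 = r ∨ x.2 = s)), (hookLength F x : ℤ))
        = PRest := by
      apply Finset.prod_congr rfl
      intro x hx
      rw [Finset.mem_filter] at hx
      rw [hoff x hx.1 hx.2]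
    have h2 : (∏ j ∈ Finset.range s, (hookLength F (r, j) : ℤ))
        = ∏ j ∈ Finset.range s, ((hookLength G (r, j) : ℤ) + 1) :=
      Finset.prod_congr rfl (fun j hj => hFaj j (Finset.mem_range.mp hj))
    have h3 : (∏ i ∈ Finset.range r, (hookLength F (i, s) : ℤ))
        = ∏ i ∈ Finset.range r, ((hookLength G (i, s) : ℤ) + 1) :=
      Finset.prod_congr rfl (fun i hi => hFdi i (Finset.mem_range.mp hi))
    rw [hGsplit (fun x => (hookLength F x : ℤ)), h1, h2, h3]
  have hprodF : (∏ x ∈ F, (hookLength F x : ℤ)) = ∏ x ∈ G, (hookLength F x : ℤ) := by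
    rw [hGF, ← Finset.mul_prod_erase F _ hrsF, hhook_rs, one_mul]
  -- RH applications
  set N : ℤ := (s : ℤ) + n - r with hNdef
  have hN0 : 0 ≤ N := by rw [hNdef]; omega
  have hRHgen : ∀ g : ℤ → ℤ,
      (∏ j ∈ Finset.range s, g ((hookLength G (r, j) : ℤ)))
        * (∏ i ∈ Finset.Ioo r (n + 1), g (cz - γ i))
      = ∏ t ∈ Finset.Icc (1 : ℤ) N, g t := by
    intro g
    have h0 := RH G hDCG (n + 1) r (by omega) hrowG0 g
    rw [hRGr] at h0
    push_cast at h0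
    have e1 : ∀ j ∈ Finset.range s, g ((s : ℤ) - j + colLen G j - r - 1)
        = g ((hookLength G (r, j) : ℤ)) := by
      intro j hj
      rw [haj j (Finset.mem_range.mp hj)]
    have e2 : ∀ i ∈ Finset.Ioo r (n + 1),
        g (((s : ℤ) - r) - ((rowLen G i : ℤ) - i)) = g (cz - γ i) := by
      intro i _
      simp only [hγdef, hczdef]
    have e3 : ((s : ℤ) + (n + 1) - 1 - r) = N := by rw [hNdef]; push_cast; ring
    rw [Finset.prod_congr rfl e1, Finset.prod_congr rfl e2, e3] at h0
    exact h0
  have hRH1 : (∏ j ∈ Finset.range s, (hookLength G (r, j) : ℤ))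
      * (∏ i ∈ Finset.Ioo r (n + 1), (cz - γ i))
      = ∏ t ∈ Finset.Icc (1 : ℤ) N, t := hRHgen id
  have hRH2 : (∏ j ∈ Finset.range s, ((hookLength G (r, j) : ℤ) + 1))
      * (∏ i ∈ Finset.Ioo r (n + 1), (cz - γ i + 1))
      = (N + 1) * ∏ t ∈ Finset.Icc (1 : ℤ) N, t := by
    rw [← shiftProd N hN0]
    exact hRHgen (fun t => t + 1)
  -- the split of the erased range
  have hsplitRI : (Finset.range (n + 1)).erase r
      = Finset.range r ∪ Finset.Ioo r (n + 1) := by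
    ext x
    simp only [Finset.mem_erase, Finset.mem_range, Finset.mem_union, Finset.mem_Ioo]
    omega
  have hdisjRI : Disjoint (Finset.range r) (Finset.Ioo r (n + 1)) := by
    rw [Finset.disjoint_left]
    intro x hx1 hx2
    simp only [Finset.mem_range] at hx1
    simp only [Finset.mem_Ioo] at hx2
    omega
  have hcolneg1 : (∏ j ∈ Finset.range r, (cz - γ j))
      = (-1) ^ r * ∏ i ∈ Finset.range r, ((hookLength G (i, s) : ℤ) + 1) := by
    have e : ∀ j ∈ Finset.range r, (cz - γ j)
        = -(((hookLength G (j, s) : ℤ)) + 1) := by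
      intro j hj
      rw [hdj j (Finset.mem_range.mp hj)]
      ring
    rw [Finset.prod_congr rfl e]
    exact prod_neg_range _ r
  have hcolneg2 : (∏ j ∈ Finset.range r, (cz - γ j + 1))
      = (-1) ^ r * ∏ i ∈ Finset.range r, (hookLength G (i, s) : ℤ) := by
    have e : ∀ j ∈ Finset.range r, (cz - γ j + 1)
        = -((hookLength G (j, s) : ℤ)) := by
      intro j hj
      rw [hdj j (Finset.mem_range.mp hj)]
      ring
    rw [Finset.prod_congr rfl e]
    exact prod_neg_range _ r
  -- THE combinatorial identity
  have hMAIN : (∏ x ∈ G, (hookLength G x : ℤ))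
      * ((cz + (n + 1)) * ∏ j ∈ (Finset.range (n + 1)).erase r, (cz - γ j))
      = (∏ x ∈ F, (hookLength F x : ℤ))
      * (∏ j ∈ (Finset.range (n + 1)).erase r, (cz - γ j + 1)) := by
    rw [hprodF, hprodGF, hprodGG, hsplitRI, Finset.prod_union hdisjRI,
      Finset.prod_union hdisjRI, hcolneg1, hcolneg2]
    have hNcz : N + 1 = cz + (n + 1) := by rw [hNdef, hczdef]; ring
    linear_combination (PRest * (∏ i ∈ Finset.range r, (hookLength G (i, s) : ℤ))
        * (∏ i ∈ Finset.range r, ((hookLength G (i, s) : ℤ) + 1)) * (-1 : ℤ) ^ r)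
      * ((cz + (n + 1)) * hRH1 - hRH2)
  -- ℂ-level definitions
  set czC : ℂ := ((cz : ℤ) : ℂ) with hczC
  set NumC : ℂ → ℂ := fun u =>
    (u - czC + 1) * ∏ j ∈ (Finset.range (n + 1)).erase r, (u - ((γ j : ℤ) : ℂ) + 1)
    with hNumC
  set DenC : ℂ → ℂ := fun u =>
    (u + ((n : ℂ) + 1)) * ∏ j ∈ (Finset.range (n + 1)).erase r, (u - ((γ j : ℤ) : ℂ))
    with hDenC
  have hcardG : G.card ≤ n + 1 :=
    le_trans (Finset.card_le_card hGsubF) (hcard_shape p)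
  have hRGle : ∀ j, rowLen G j ≤ n + 1 := fun j =>
    le_trans (Finset.card_filter_le _ _) hcardG
  have hγbd : ∀ j, j ≤ n + 1 → -((n : ℤ) + 1) ≤ γ j ∧ γ j ≤ (n : ℤ) + 1 := by
    intro j hj
    have h1 := hRGle j
    simp only [hγdef]
    omega
  have hczbd : -((n : ℤ)) ≤ cz ∧ cz ≤ (n : ℤ) := by
    rw [hczdef]; omega
  -- continuity and nonvanishing of the denominator at czC
  have hDen0 : DenC czC ≠ 0 := by
    rw [hDenC]
    apply mul_ne_zero
    · have h1 : (cz + ((n : ℤ) + 1)) ≠ 0 := by rw [hczdef]; omega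
      rw [hczC]
      intro h
      apply h1
      have : ((cz + ((n : ℤ) + 1) : ℤ) : ℂ) = 0 := by push_cast; linear_combination h
      exact_mod_cast this
    · apply Finset.prod_ne_zero_iff.mpr
      intro j hj
      rw [Finset.mem_erase, Finset.mem_range] at hj
      have hne : γ j ≠ cz := by
        rw [← hγr]
        exact fun h => hj.1 (hγanti.injective h)
      rw [hczC]
      intro h
      apply hne
      have : ((cz - γ j : ℤ) : ℂ) = 0 := by push_cast; linear_combination h
      have := (Int.cast_eq_zero (α := ℂ)).mp this
      omega
  have hNumCont : Continuous NumC := by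
    rw [hNumC]
    exact ((continuous_id.sub continuous_const).add continuous_const).mul
      (continuous_finset_prod _ (fun j _ =>
        (continuous_id.sub continuous_const).add continuous_const))
  have hDenCont : Continuous DenC := by
    rw [hDenC]
    exact (continuous_id.add continuous_const).mul
      (continuous_finset_prod _ (fun j _ => continuous_id.sub continuous_const))
  -- the value identity
  have hclast : contentOf T lastI = czC := by
    rw [hczC, hczdef]
    push_cast
    rfl
  have hWinner : ∀ k' : Fin m,
      (∏ i ∈ Finset.univ.filter (fun i : Fin (n+1) => (T i).2 = k'),
        (hookLength (shapeOf T (T i).2) (T i).1 : ℂ))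
      = ∏ x ∈ shapeOf T k', (hookLength (shapeOf T k') x : ℂ) := by
    intro k'
    calc (∏ i ∈ Finset.univ.filter (fun i : Fin (n+1) => (T i).2 = k'),
            (hookLength (shapeOf T (T i).2) (T i).1 : ℂ))
        = ∏ i ∈ Finset.univ.filter (fun i : Fin (n+1) => (T i).2 = k'),
            (hookLength (shapeOf T k') (T i).1 : ℂ) := by
          apply Finset.prod_congr rfl
          intro i hi
          rw [Finset.mem_filter] at hi
          rw [hi.2]
      _ = ∏ x ∈ (Finset.univ.filter
              (fun i : Fin (n+1) => (T i).2 = k')).image (fun i => (T i).1),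
            (hookLength (shapeOf T k') x : ℂ) := by
          rw [Finset.prod_image]
          intro i hi j hj hij
          rw [Finset.mem_coe, Finset.mem_filter] at hi hj
          exact hinj (Prod.ext hij (hi.2.trans hj.2.symm))
      _ = ∏ x ∈ shapeOf T k', (hookLength (shapeOf T k') x : ℂ) := rfl
  set W : ℂ := ∏ k' ∈ Finset.univ.erase p,
      ∏ x ∈ shapeOf T k', (hookLength (shapeOf T k') x : ℂ) with hWdef
  have hv1 : (∏ i : Fin (n + 1), (hookLength (shapeOf T (T i).2) (T i).1 : ℂ))
      = (∏ x ∈ F, (hookLength F x : ℂ)) * W := by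
    rw [← Finset.prod_fiberwise_of_maps_to (t := (Finset.univ : Finset (Fin m)))
      (g := fun i => (T i).2) (fun x _ => Finset.mem_univ _)]
    rw [← Finset.mul_prod_erase Finset.univ _ (Finset.mem_univ p), hWdef]
    congr 1
    · exact hWinner p
    · apply Finset.prod_congr rfl
      intro k' _
      exact hWinner k'
  have hEraseEq : ∀ k' : Fin m, k' ≠ p → shapeOfErase T k' = shapeOf T k' := by
    intro k' hk'
    ext x
    rw [mem_shapeE, mem_shape]
    constructor
    · rintro ⟨i, _, h2, h3⟩
      exact ⟨i, h2, h3⟩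
    · rintro ⟨i, h2, h3⟩
      refine ⟨i, ?_, h2, h3⟩
      rintro rfl
      exact hk' (by rw [← h2])
  have hv2 : (∏ i ∈ Finset.univ.erase lastI,
        (hookLength (shapeOfErase T (T i).2) (T i).1 : ℂ))
      = (∏ x ∈ G, (hookLength G x : ℂ)) * W := by
    rw [← Finset.prod_fiberwise_of_maps_to (t := (Finset.univ : Finset (Fin m)))
      (g := fun i => (T i).2) (fun x _ => Finset.mem_univ _)]
    rw [← Finset.mul_prod_erase Finset.univ _ (Finset.mem_univ p), hWdef]
    congr 1
    · -- fiber over p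
      calc (∏ i ∈ (Finset.univ.erase lastI).filter (fun i : Fin (n+1) => (T i).2 = p),
              (hookLength (shapeOfErase T (T i).2) (T i).1 : ℂ))
          = ∏ i ∈ (Finset.univ.erase lastI).filter (fun i : Fin (n+1) => (T i).2 = p),
              (hookLength G (T i).1 : ℂ) := by
            apply Finset.prod_congr rfl
            intro i hi
            rw [Finset.mem_filter] at hi
            rw [hi.2, hGdef]
        _ = ∏ x ∈ ((Finset.univ.erase lastI).filter
                (fun i : Fin (n+1) => (T i).2 = p)).image (fun i => (T i).1),
              (hookLength G x : ℂ) := by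
            rw [Finset.prod_image]
            intro i hi j hj hij
            rw [Finset.mem_coe, Finset.mem_filter] at hi hj
            exact hinj (Prod.ext hij (hi.2.trans hj.2.symm))
        _ = ∏ x ∈ G, (hookLength G x : ℂ) := rfl
    · apply Finset.prod_congr rfl
      intro k' hk'
      rw [Finset.mem_erase] at hk'
      have hfib : (Finset.univ.erase lastI).filter (fun i : Fin (n+1) => (T i).2 = k')
          = Finset.univ.filter (fun i : Fin (n+1) => (T i).2 = k') := by
        ext i
        simp only [Finset.mem_filter, Finset.mem_erase, Finset.mem_univ, true_and, and_true]
        constructor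
        · rintro ⟨_, h2⟩; exact h2
        · intro h2
          refine ⟨?_, h2⟩
          rintro rfl
          exact hk'.1 (by rw [← h2])
      rw [hfib]
      have := hWinner k'
      rw [← this]
      apply Finset.prod_congr rfl
      intro i hi
      rw [Finset.mem_filter] at hi
      rw [hi.2, hEraseEq k' hk'.1]
  have hWne : W ≠ 0 := by
    rw [hWdef]
    apply Finset.prod_ne_zero_iff.mpr
    intro k' _
    apply Finset.prod_ne_zero_iff.mpr
    intro x hx
    exact_mod_cast (hook_pos hx).ne'
  have hFne : (∏ x ∈ F, (hookLength F x : ℂ)) ≠ 0 := by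
    apply Finset.prod_ne_zero_iff.mpr
    intro x hx
    exact_mod_cast (hook_pos hx).ne'
  have hMAINC : (∏ x ∈ G, (hookLength G x : ℂ))
      * ((czC + ((n : ℂ) + 1)) * ∏ j ∈ (Finset.range (n + 1)).erase r, (czC - ((γ j : ℤ) : ℂ)))
      = (∏ x ∈ F, (hookLength F x : ℂ))
      * (∏ j ∈ (Finset.range (n + 1)).erase r, (czC - ((γ j : ℤ) : ℂ) + 1)) := by
    have hc := congrArg (fun z : ℤ => (z : ℂ)) hMAIN
    push_cast at hc
    rw [hczC]
    push_cast
    convert hc using 2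
  have hVAL : ((∏ i ∈ Finset.univ.erase lastI,
        (hookLength (shapeOfErase T (T i).2) (T i).1 : ℂ)) /
      (∏ i : Fin (n + 1), (hookLength (shapeOf T (T i).2) (T i).1 : ℂ)))
      = NumC czC / DenC czC := by
    rw [hv1, hv2, mul_div_mul_right _ _ hWne, div_eq_div_iff hFne hDen0, hNumC, hDenC]
    linear_combination hMAINC
  -- the generic chain identity away from bad points
  have hchain : ∀ u : ℂ, (∀ t : ℤ, |t| ≤ (n : ℤ) + 5 → u ≠ (t : ℂ)) →
      ((u - czC) / u) * (∏ i ∈ Finset.univ.erase lastI,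
          ((u - contentOf T i) ^ 2 /
            ((u - contentOf T i) ^ 2 - if (T i).2 = p then 1 else 0)))
        = NumC u / DenC u := by
    intro u hu
    have hne : ∀ t : ℤ, |t| ≤ (n : ℤ) + 5 → u - (t : ℂ) ≠ 0 :=
      fun t ht => sub_ne_zero.mpr (hu t ht)
    have hcontent : ∀ i : Fin (n + 1),
        contentOf T i = (((((T i).1.2 : ℤ) - (T i).1.1) : ℤ) : ℂ) := by
      intro i
      rw [contentOf]
      push_cast
      ring
    have hcbd : ∀ i : Fin (n + 1), |((T i).1.2 : ℤ) - (T i).1.1| ≤ (n : ℤ) + 5 := by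
      intro i
      have h := hcell (T i).2 (T i).1 (by rw [mem_shape]; exact ⟨i, rfl, rfl⟩)
      rw [abs_le]
      omega
    have hQ1 : (∏ i ∈ (Finset.univ.erase lastI).filter (fun i => ¬ (T i).2 = p),
        ((u - contentOf T i) ^ 2 /
          ((u - contentOf T i) ^ 2 - if (T i).2 = p then 1 else 0))) = 1 := by
      apply Finset.prod_eq_one
      intro i hi
      rw [Finset.mem_filter] at hi
      rw [if_neg hi.2, sub_zero]
      apply div_self
      apply pow_ne_zero
      rw [hcontent i]
      exact hne _ (hcbd i)
    rw [← Finset.prod_filter_mul_prod_filter_not (Finset.univ.erase lastI)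
      (fun i => (T i).2 = p), hQ1, mul_one]
    have hE1 : (∏ i ∈ (Finset.univ.erase lastI).filter (fun i => (T i).2 = p),
        ((u - contentOf T i) ^ 2 /
          ((u - contentOf T i) ^ 2 - if (T i).2 = p then 1 else 0)))
        = ∏ x ∈ G, ((u - ((x.2 : ℂ) - (x.1 : ℂ))) ^ 2 /
            ((u - ((x.2 : ℂ) - (x.1 : ℂ))) ^ 2 - 1)) := by
      calc (∏ i ∈ (Finset.univ.erase lastI).filter (fun i => (T i).2 = p),
          ((u - contentOf T i) ^ 2 /
            ((u - contentOf T i) ^ 2 - if (T i).2 = p then 1 else 0)))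
          = ∏ i ∈ (Finset.univ.erase lastI).filter (fun i => (T i).2 = p),
            ((u - (((T i).1.2 : ℂ) - ((T i).1.1 : ℂ))) ^ 2 /
              ((u - (((T i).1.2 : ℂ) - ((T i).1.1 : ℂ))) ^ 2 - 1)) := by
            apply Finset.prod_congr rfl
            intro i hi
            rw [Finset.mem_filter] at hi
            rw [if_pos hi.2, contentOf]
        _ = ∏ x ∈ ((Finset.univ.erase lastI).filter
              (fun i : Fin (n+1) => (T i).2 = p)).image (fun i => (T i).1),
            ((u - ((x.2 : ℂ) - (x.1 : ℂ))) ^ 2 /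
              ((u - ((x.2 : ℂ) - (x.1 : ℂ))) ^ 2 - 1)) := by
            rw [Finset.prod_image]
            intro i hi j hj hij
            rw [Finset.mem_coe, Finset.mem_filter] at hi hj
            exact hinj (Prod.ext hij (hi.2.trans hj.2.symm))
        _ = ∏ x ∈ G, ((u - ((x.2 : ℂ) - (x.1 : ℂ))) ^ 2 /
              ((u - ((x.2 : ℂ) - (x.1 : ℂ))) ^ 2 - 1)) := rfl
    rw [hE1]
    have hGbi : G = (Finset.range (n + 1)).biUnion
        (fun j => (Finset.range (rowLen G j)).image (fun t => (j, t))) := by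
      ext x
      simp only [Finset.mem_biUnion, Finset.mem_range, Finset.mem_image]
      constructor
      · intro hx
        have h1 : x.2 < rowLen G x.1 := (mem_iff_row hDCG).mp hx
        have h2 : x.1 < n + 1 := by
          by_contra h
          rw [hrowG0 x.1 (by omega)] at h1
          omega
        exact ⟨x.1, h2, x.2, h1, rfl⟩
      · rintro ⟨j, hj, t, ht, rfl⟩
        exact (mem_iff_row hDCG).mpr ht
    have hpair : (↑(Finset.range (n + 1)) : Set ℕ).PairwiseDisjoint
        (fun j => (Finset.range (rowLen G j)).image (fun t => (j, t))) := by
      intro a _ b _ hab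
      simp only [Function.onFun, Finset.disjoint_left]
      intro x hx1 hx2
      simp only [Finset.mem_image, Finset.mem_range] at hx1 hx2
      obtain ⟨t1, _, rfl⟩ := hx1
      obtain ⟨t2, _, h⟩ := hx2
      exact hab (congrArg Prod.fst h).symm
    rw [hGbi, Finset.prod_biUnion hpair]
    have hrowp : ∀ j ∈ Finset.range (n + 1),
        (∏ x ∈ (Finset.range (rowLen G j)).image (fun t => (j, t)),
          ((u - ((x.2 : ℂ) - (x.1 : ℂ))) ^ 2 /
            ((u - ((x.2 : ℂ) - (x.1 : ℂ))) ^ 2 - 1)))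
        = ((u + (j : ℂ)) / (u + (j : ℂ) + 1))
          * ((u - ((γ j : ℤ) : ℂ) + 1) / (u - ((γ j : ℤ) : ℂ))) := by
      intro j hj
      rw [Finset.mem_range] at hj
      rw [Finset.prod_image (by
        intro a _ b _ h
        exact ((Prod.mk.injEq _ _ _ _).mp h).2)]
      have hmmle : rowLen G j ≤ n + 1 := hRGle j
      have h1 : ∀ t : ℕ, t ≤ rowLen G j → (u + (j : ℂ)) - t ≠ 0 := by
        intro t ht
        have h := hne ((t : ℤ) - j) (by rw [abs_le]; omega)
        have e : (u + (j : ℂ)) - t = u - ((((t : ℤ) - j) : ℤ) : ℂ) := by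
          push_cast
          ring
        rw [e]
        exact h
      have h2 : ∀ t : ℕ, t ≤ rowLen G j → (u + (j : ℂ)) + 1 - t ≠ 0 := by
        intro t ht
        have h := hne ((t : ℤ) - j - 1) (by rw [abs_le]; omega)
        have e : (u + (j : ℂ)) + 1 - t = u - ((((t : ℤ) - j - 1) : ℤ) : ℂ) := by
          push_cast
          ring
        rw [e]
        exact h
      have hq : ∀ t ∈ Finset.range (rowLen G j),
          ((u - (((t : ℕ) : ℂ) - (j : ℂ))) ^ 2 /
            ((u - (((t : ℕ) : ℂ) - (j : ℂ))) ^ 2 - 1))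
          = (((u + (j : ℂ)) - t) / ((u + (j : ℂ)) - t - 1))
            * (((u + (j : ℂ)) - t) / ((u + (j : ℂ)) - t + 1)) := by
        intro t _
        rw [div_mul_div_comm]
        congr 1
        · ring
        · ring
      rw [Finset.prod_congr rfl hq, Finset.prod_mul_distrib,
        tele1 (u + (j : ℂ)) (rowLen G j) h1, tele2 (u + (j : ℂ)) (rowLen G j) h2]
      have hγj : ((γ j : ℤ) : ℂ) = ((rowLen G j : ℕ) : ℂ) - (j : ℂ) := by
        rw [hγdef]
        push_cast
        ring
      rw [div_mul_div_comm, div_mul_div_comm]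
      congr 1
      · rw [hγj]; ring
      · rw [hγj]; ring
    rw [Finset.prod_congr rfl hrowp, Finset.prod_mul_distrib]
    have h3 : ∀ t : ℕ, t ≤ n + 1 → u + (t : ℂ) ≠ 0 := by
      intro t ht
      have h := hne (-(t : ℤ)) (by rw [abs_le]; omega)
      have e : u + (t : ℂ) = u - (((-(t : ℤ)) : ℤ) : ℂ) := by push_cast; ring
      rw [e]
      exact h
    rw [tele3 u (n + 1) h3]
    have hrmem : r ∈ Finset.range (n + 1) := by
      rw [Finset.mem_range]
      omega
    rw [← Finset.mul_prod_erase (Finset.range (n + 1)) _ hrmem]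
    have hγrC : ((γ r : ℤ) : ℂ) = czC := by rw [hγr, hczC]
    rw [hγrC]
    rw [Finset.prod_div_distrib]
    -- nonvanishing facts
    have hu0 : u ≠ 0 := by
      have := hu 0 (by simp; omega)
      simpa using this
    have hucz : u - czC ≠ 0 := by
      rw [hczC]
      exact hne cz (by rw [abs_le]; omega)
    have hnn : ((n + 1 : ℕ) : ℂ) = (n : ℂ) + 1 := by push_cast; ring
    have hun : u + ((n + 1 : ℕ) : ℂ) ≠ 0 := by
      have h := hne (-((n : ℤ) + 1)) (by rw [abs_le]; omega)
      have e : u + ((n + 1 : ℕ) : ℂ) = u - (((-((n : ℤ) + 1)) : ℤ) : ℂ) := by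
        push_cast
        ring
      rw [e]
      exact h
    have hPden : (∏ j ∈ (Finset.range (n + 1)).erase r, (u - ((γ j : ℤ) : ℂ))) ≠ 0 := by
      apply Finset.prod_ne_zero_iff.mpr
      intro j hj
      rw [Finset.mem_erase, Finset.mem_range] at hj
      have := hγbd j (by omega)
      exact hne (γ j) (by rw [abs_le]; omega)
    rw [hNumC, hDenC, hnn] at *
    field_simp
  -- eventually, the function agrees with NumC/DenC
  have heven : ∀ᶠ u in nhdsWithin czC {czC}ᶜ,
      (∀ t : ℤ, |t| ≤ (n : ℤ) + 5 → u ≠ (t : ℂ)) := by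
    have hfin : Set.Finite {x : ℂ | ∃ t : ℤ, |t| ≤ (n : ℤ) + 5 ∧ x = (t : ℂ) ∧ x ≠ czC} := by
      apply Set.Finite.subset
        (Set.Finite.image (fun t : ℤ => (t : ℂ)) (Set.finite_Icc (-((n : ℤ) + 5)) ((n : ℤ) + 5)))
      rintro x ⟨t, ht, rfl, -⟩
      exact ⟨t, by rw [Set.mem_Icc]; rw [abs_le] at ht; exact ht, rfl⟩
    have hnm : czC ∉ {x : ℂ | ∃ t : ℤ, |t| ≤ (n : ℤ) + 5 ∧ x = (t : ℂ) ∧ x ≠ czC} := by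
      rintro ⟨t, _, _, h⟩
      exact h rfl
    have hmem : {x : ℂ | ∃ t : ℤ, |t| ≤ (n : ℤ) + 5 ∧ x = (t : ℂ) ∧ x ≠ czC}ᶜ ∈ nhds czC :=
      hfin.isClosed.isOpen_compl.mem_nhds hnm
    have h1 : ∀ᶠ u in nhdsWithin czC {czC}ᶜ,
        u ∈ {x : ℂ | ∃ t : ℤ, |t| ≤ (n : ℤ) + 5 ∧ x = (t : ℂ) ∧ x ≠ czC}ᶜ :=
      Filter.eventually_iff.mpr (mem_nhdsWithin_of_mem_nhds hmem)
    have h2 : ∀ᶠ u in nhdsWithin czC {czC}ᶜ, u ≠ czC :=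
      Filter.eventually_iff.mpr self_mem_nhdsWithin
    filter_upwards [h1, h2] with u hu1 hu2 t ht heq
    exact hu1 ⟨t, ht, heq, hu2⟩
  have htend : Filter.Tendsto (fun u => NumC u / DenC u) (nhdsWithin czC {czC}ᶜ)
      (nhds (NumC czC / DenC czC)) :=
    Filter.Tendsto.mono_left
      (Filter.Tendsto.div (hNumCont.tendsto czC) (hDenCont.tendsto czC) hDen0)
      nhdsWithin_le_nhds
  rw [hVAL, hclast]
  apply Filter.Tendsto.congr' _ htend
  filter_upwards [heven] with u hu
  exact (hchain u hu).symm

end
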